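/- Let 1 → R → F → G → 1 be a free presentation of a finite group G with F free of finite rank. Then the group F/[R,R] is torsion-free. -/

import Mathlib

/-- A monoid is torsion-free if all its non-identity elements have infinite order
(the definition `Monoid.IsTorsionFree` of the older Mathlib, since removed). -/
def Monoid.IsTorsionFree (G : Type*) [Monoid G] : Prop :=
  ∀ g : G, g ≠ 1 → ¬IsOfFinOrder g

/-- The abelianization of a free group is torsion-free. -/
lemma abelianization_free_torsionfree {K : Type*} [Group K] [IsFreeGroup K]
    (a : Abelianization K) (n : ℕ) (hn : n ≠ 0) (h : a ^ n = 1) : a = 1 := by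
  set e := (IsFreeGroup.toFreeGroup K).abelianizationCongr
  have h2 : (e a) ^ n = 1 := by rw [← map_pow, h, map_one]
  -- move to FreeAbelianGroup, then to Finsupp
  set b : FreeAbelianGroup (IsFreeGroup.Generators K) := Additive.ofMul (e a)
  have hb : n • b = 0 := h2
  have hb' : n • (FreeAbelianGroup.equivFinsupp _ b) = 0 := by
    rw [← map_nsmul, hb, map_zero]
  have hzero : (FreeAbelianGroup.equivFinsupp _ b) = 0 := by
    ext i
    have := congrArg (fun f => f i) hb'
    simp only [Finsupp.smul_apply, smul_eq_mul, Finsupp.coe_zero, Pi.zero_apply] at this ⊢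
    have : (n : ℤ) * (FreeAbelianGroup.equivFinsupp _ b) i = 0 := by
      simpa using this
    rcases mul_eq_zero.mp this with h' | h'
    · exact absurd (by exact_mod_cast h') hn
    · exact h'
  have : b = 0 := (FreeAbelianGroup.equivFinsupp _).injective (by simpa using hzero)
  have : e a = 1 := this
  exact e.injective (by simpa using this)

/-- In a free group, if a positive power of `w` lies in the commutator subgroup,
then so does `w`. -/
lemma mem_commutator_of_pow_mem {K : Type*} [Group K] [IsFreeGroup K]
    {w : K} {n : ℕ} (hn : n ≠ 0) (h : w ^ n ∈ commutator K) : w ∈ commutator K := by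
  have h1 : (Abelianization.of w) ^ n = 1 := by
    rw [← map_pow]
    exact (QuotientGroup.eq_one_iff _).mpr h
  have h2 : Abelianization.of w = 1 := abelianization_free_torsionfree _ n hn h1
  exact (QuotientGroup.eq_one_iff _).mp h2

/-- For a subgroup `H`, membership in `⁅H, H⁆` of an element of `H` is equivalent to
membership of the corresponding element of the group `H` in `commutator H`. -/
lemma mem_commutator_subgroup_iff {F : Type*} [Group F] (H : Subgroup F) (w : H) :
    (w : F) ∈ ⁅H, H⁆ ↔ w ∈ commutator H := by
  have hmap : Subgroup.map H.subtype (commutator H) = ⁅H, H⁆ := by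
    rw [commutator_def, Subgroup.map_commutator]
    congr 1 <;>
    · rw [← MonoidHom.range_eq_map, Subgroup.range_subtype]
  constructor
  · intro hw
    rw [← hmap] at hw
    obtain ⟨y, hy, hyw⟩ := hw
    have : y = w := Subtype.ext hyw
    rwa [← this]
  · intro hw
    rw [← hmap]
    exact ⟨w, hw, rfl⟩

/-- If `1 → R → F → G → 1` is a free presentation of a finite group `G` with
`F` free of finite rank, then `F/[R,R]` is torsion-free. -/
theorem F_mod_commutator_torsionFree
    {G : Type*} [Group G] [Finite G]
    {d : ℕ} (φ : FreeGroup (Fin d) →* G) (hφ : Function.Surjective φ) :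
    Monoid.IsTorsionFree
      (FreeGroup (Fin d) ⧸ (⁅φ.ker, φ.ker⁆ : Subgroup (FreeGroup (Fin d)))) := by
  intro x hx hfin
  apply hx
  obtain ⟨n, hn, hxn⟩ := hfin.exists_pow_eq_one
  obtain ⟨w, rfl⟩ := QuotientGroup.mk_surjective x
  set R := φ.ker with hR
  have hwn : w ^ n ∈ (⁅R, R⁆ : Subgroup (FreeGroup (Fin d))) := by
    rw [← QuotientGroup.eq_one_iff]
    exact hxn
  -- the subgroup H = φ⁻¹(⟨φ w⟩)
  set H : Subgroup (FreeGroup (Fin d)) :=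
    Subgroup.comap φ (Subgroup.zpowers (φ w)) with hH
  have hwH : w ∈ H := Subgroup.mem_comap.mpr (Subgroup.mem_zpowers _)
  have hRH : R ≤ H := by
    intro r hr
    rw [Subgroup.mem_comap]
    have : φ r = 1 := hr
    rw [this]
    exact Subgroup.one_mem _
  -- ⁅H,H⁆ ≤ R since H/R is abelian (image of H in G is cyclic)
  have hHHR : (⁅H, H⁆ : Subgroup (FreeGroup (Fin d))) ≤ R := by
    rw [Subgroup.commutator_le]
    intro g₁ hg₁ g₂ hg₂
    have h1 : φ g₁ ∈ Subgroup.zpowers (φ w) := hg₁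
    have h2 : φ g₂ ∈ Subgroup.zpowers (φ w) := hg₂
    obtain ⟨i, hi⟩ := h1
    obtain ⟨j, hj⟩ := h2
    open scoped commutatorElement in show φ ⁅g₁, g₂⁆ = 1
    rw [map_commutatorElement, commutatorElement_eq_one_iff_commute, ← hi, ← hj]
    exact Commute.zpow_zpow (Commute.refl _) i j
  -- step 1: w ∈ ⁅H,H⁆ hence w ∈ R
  have hwR : w ∈ R := by
    apply hHHR
    have key : (⟨w, hwH⟩ : H) ∈ commutator H := by
      apply mem_commutator_of_pow_mem hn.ne'
      rw [← mem_commutator_subgroup_iff]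
      show w ^ n ∈ (⁅H, H⁆ : Subgroup (FreeGroup (Fin d)))
      exact Subgroup.commutator_mono hRH hRH hwn
    exact (mem_commutator_subgroup_iff H ⟨w, hwH⟩).mpr key
  -- step 2: w ∈ ⁅R,R⁆
  have key : (⟨w, hwR⟩ : R) ∈ commutator R := by
    apply mem_commutator_of_pow_mem hn.ne'
    rw [← mem_commutator_subgroup_iff]
    exact hwn
  have : w ∈ (⁅R, R⁆ : Subgroup (FreeGroup (Fin d))) :=
    (mem_commutator_subgroup_iff R ⟨w, hwR⟩).mpr key
  exact (QuotientGroup.eq_one_iff _).mpr this
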